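/- (Counterexample.) Define ψ(u) = Σ_{n=1}^∞ n^{(2+γ)/(1−γ)} · 1_{(n − n^{−(4−γ)/(1−γ)}, n)}(u) for u > 0. Then ψ is Lebesgue integrable on (0,∞), with ∫_0^∞ ψ(u) du = Σ_{n=1}^∞ n^{−2} < ∞, yet for every integer n ≥ 1 one has I(ψ, n) ≥ γ^{−1} n^{3−2γ} − n^{−2}; in particular limsup_{t→∞} I(ψ, t) = ∞, so ∫_0^t (1 − u/t)^{γ−1} ψ(u) du does not converge to ∫_0^∞ ψ(u) du as t → ∞. -/

import Mathlib

open MeasureTheory Set Filter Real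

/-- `I(ψ, t) = ∫_0^t [ (1 − u/t)^{γ−1} − 1 ] ψ(u) du`. -/
noncomputable def Iweight (γ : ℝ) (ψ : ℝ → ℝ) (t : ℝ) : ℝ :=
  ∫ u in Ioo (0 : ℝ) t, ((1 - u / t) ^ (γ - 1) - 1) * ψ u

/-- The counterexample function
`ψ(u) = Σ_{n≥1} n^{(2+γ)/(1−γ)} 1_{(n − n^{−(4−γ)/(1−γ)}, n)}(u)`. -/
noncomputable def psiCE (γ : ℝ) (u : ℝ) : ℝ :=
  ∑' n : ℕ,
    indicator
      (Ioo (((n : ℝ) + 1) - ((n : ℝ) + 1) ^ (-((4 - γ) / (1 - γ)))) ((n : ℝ) + 1))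
      (fun _ => ((n : ℝ) + 1) ^ ((2 + γ) / (1 - γ))) u

namespace CEaux

/-- Left endpoint of the `k`-th bump. -/
noncomputable def aCE (γ : ℝ) (k : ℕ) : ℝ :=
  ((k : ℝ) + 1) - ((k : ℝ) + 1) ^ (-((4 - γ) / (1 - γ)))

/-- The `k`-th bump. -/
noncomputable def FCE (γ : ℝ) (k : ℕ) : ℝ → ℝ :=
  indicator (Ioo (aCE γ k) ((k : ℝ) + 1)) (fun _ => ((k : ℝ) + 1) ^ ((2 + γ) / (1 - γ)))

lemma psiCE_eq (γ : ℝ) (u : ℝ) : psiCE γ u = ∑' k, FCE γ k u := rfl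

variable {γ : ℝ}

lemma k_le_aCE (hγ : γ ∈ Ioo (0 : ℝ) 1) (k : ℕ) : (k : ℝ) ≤ aCE γ k := by
  have h1 : (0:ℝ) < 1 - γ := by linarith [hγ.2]
  have h2 : (0:ℝ) ≤ (4 - γ) / (1 - γ) := div_nonneg (by linarith) (by linarith)
  have h3 : ((k : ℝ) + 1) ^ (-((4 - γ) / (1 - γ))) ≤ 1 :=
    Real.rpow_le_one_of_one_le_of_nonpos
      (le_add_of_nonneg_left (Nat.cast_nonneg k)) (by linarith)
  have : (0:ℝ) ≤ (k:ℝ) := Nat.cast_nonneg k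
  unfold aCE; linarith

lemma aCE_lt (γ : ℝ) (k : ℕ) : aCE γ k < (k : ℝ) + 1 := by
  have : (0:ℝ) < ((k : ℝ) + 1) ^ (-((4 - γ) / (1 - γ))) :=
    Real.rpow_pos_of_pos (by positivity) _
  unfold aCE; linarith

lemma aCE_nonneg (hγ : γ ∈ Ioo (0 : ℝ) 1) (k : ℕ) : 0 ≤ aCE γ k :=
  le_trans (Nat.cast_nonneg k) (k_le_aCE hγ k)

lemma not_mem_of_ne (hγ : γ ∈ Ioo (0 : ℝ) 1) {j k : ℕ} {u : ℝ} (hjk : j ≠ k)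
    (hu : u ∈ Ioo (aCE γ k) ((k : ℝ) + 1)) : u ∉ Ioo (aCE γ j) ((j : ℝ) + 1) := by
  intro hj
  apply hjk
  have h1 : (j : ℝ) < (k : ℝ) + 1 := lt_of_le_of_lt (le_trans (k_le_aCE hγ j) hj.1.le) hu.2
  have h2 : (k : ℝ) < (j : ℝ) + 1 := lt_of_le_of_lt (le_trans (k_le_aCE hγ k) hu.1.le) hj.2
  have h1' : j < k + 1 := by exact_mod_cast h1
  have h2' : k < j + 1 := by exact_mod_cast h2
  omega

lemma psi_eval (hγ : γ ∈ Ioo (0 : ℝ) 1) (k : ℕ) {u : ℝ}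
    (hu : u ∈ Ioo (aCE γ k) ((k : ℝ) + 1)) :
    psiCE γ u = ((k : ℝ) + 1) ^ ((2 + γ) / (1 - γ)) := by
  rw [psiCE_eq]
  have h0 : ∀ j, j ≠ k → FCE γ j u = 0 := fun j hjk =>
    indicator_of_notMem (not_mem_of_ne hγ hjk hu) _
  rw [tsum_eq_single k h0]
  exact indicator_of_mem hu _

lemma psi_zero {u : ℝ} (h : ∀ k : ℕ, u ∉ Ioo (aCE γ k) ((k : ℝ) + 1)) :
    psiCE γ u = 0 := by
  rw [psiCE_eq]
  have : ∀ k : ℕ, FCE γ k u = 0 := fun k => indicator_of_notMem (h k) _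
  simp [this]

lemma psi_nonneg (γ : ℝ) (u : ℝ) : 0 ≤ psiCE γ u := by
  rw [psiCE_eq]
  exact tsum_nonneg fun k =>
    indicator_nonneg (fun _ _ => Real.rpow_nonneg (by positivity) _) _

lemma FCE_nonneg (γ : ℝ) (k : ℕ) (u : ℝ) : 0 ≤ FCE γ k u :=
  indicator_nonneg (fun _ _ => Real.rpow_nonneg (by positivity) _) _

lemma FCE_meas (γ : ℝ) (k : ℕ) : Measurable (FCE γ k) :=
  measurable_const.indicator measurableSet_Ioo

lemma summable_FCE (hγ : γ ∈ Ioo (0 : ℝ) 1) (u : ℝ) : Summable fun k => FCE γ k u := by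
  by_cases h : ∃ k : ℕ, u ∈ Ioo (aCE γ k) ((k : ℝ) + 1)
  · obtain ⟨k, hk⟩ := h
    refine summable_of_ne_finset_zero (s := {k}) fun j hj => ?_
    exact indicator_of_notMem (not_mem_of_ne hγ (by simpa using hj) hk) _
  · refine summable_of_ne_finset_zero (s := ∅) fun j _ => ?_
    exact indicator_of_notMem (fun hm => h ⟨j, hm⟩) _

lemma psi_meas (hγ : γ ∈ Ioo (0 : ℝ) 1) : Measurable (psiCE γ) := by
  apply measurable_of_tendsto_metrizable
    (f := fun N u => ∑ k ∈ Finset.range N, FCE γ k u)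
    (fun N => Finset.measurable_sum _ fun k _ => FCE_meas γ k)
  rw [tendsto_pi_nhds]
  intro u
  simpa [psiCE_eq] using (summable_FCE hγ u).hasSum.tendsto_sum_nat

lemma exp_sum (hγ : γ ∈ Ioo (0 : ℝ) 1) :
    (2 + γ) / (1 - γ) + -((4 - γ) / (1 - γ)) = (-2 : ℝ) := by
  have h1 : (1:ℝ) - γ ≠ 0 := ne_of_gt (by linarith [hγ.2])
  field_simp
  ring

lemma lint_F (hγ : γ ∈ Ioo (0 : ℝ) 1) (k : ℕ) :
    ∫⁻ u in Ioi (0 : ℝ), ENNReal.ofReal (FCE γ k u) =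
      ENNReal.ofReal (((k : ℝ) + 1) ^ (-2 : ℝ)) := by
  have hsub : Ioo (aCE γ k) ((k : ℝ) + 1) ⊆ Ioi (0 : ℝ) := fun x hx =>
    lt_of_le_of_lt (aCE_nonneg hγ k) hx.1
  have heq : (fun u => ENNReal.ofReal (FCE γ k u)) =
      indicator (Ioo (aCE γ k) ((k : ℝ) + 1))
        (fun _ => ENNReal.ofReal (((k : ℝ) + 1) ^ ((2 + γ) / (1 - γ)))) := by
    funext u
    unfold FCE
    by_cases h : u ∈ Ioo (aCE γ k) ((k : ℝ) + 1) <;> simp [h]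
  rw [heq, lintegral_indicator measurableSet_Ioo,
    Measure.restrict_restrict measurableSet_Ioo,
    inter_eq_self_of_subset_left hsub, setLIntegral_const, Real.volume_Ioo,
    ← ENNReal.ofReal_mul (Real.rpow_nonneg (by positivity) _)]
  congr 1
  have hba : (k : ℝ) + 1 - aCE γ k = ((k : ℝ) + 1) ^ (-((4 - γ) / (1 - γ))) := by
    unfold aCE; ring
  rw [hba, ← Real.rpow_add (by positivity), exp_sum hγ]

lemma sum_inv_sq : Summable (fun k : ℕ => ((k : ℝ) + 1) ^ (-2 : ℝ)) := by
  have h := (Real.summable_nat_rpow (p := (-2 : ℝ))).mpr (by norm_num)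
  refine (h.comp_injective Nat.succ_injective).congr fun k => ?_
  simp [Function.comp, Nat.succ_eq_add_one]

lemma sum_ofReal_ne_top :
    (∑' k : ℕ, ENNReal.ofReal (((k : ℝ) + 1) ^ (-2 : ℝ))) ≠ ⊤ := by
  rw [← ENNReal.ofReal_tsum_of_nonneg (fun k => Real.rpow_nonneg (by positivity) _)
    sum_inv_sq]
  exact ENNReal.ofReal_ne_top

lemma lint_psi (hγ : γ ∈ Ioo (0 : ℝ) 1) :
    ∫⁻ u in Ioi (0 : ℝ), ENNReal.ofReal (psiCE γ u) =
      ∑' k : ℕ, ENNReal.ofReal (((k : ℝ) + 1) ^ (-2 : ℝ)) := by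
  have h1 : ∀ u : ℝ, ENNReal.ofReal (psiCE γ u) = ∑' k, ENNReal.ofReal (FCE γ k u) := by
    intro u
    rw [psiCE_eq]
    exact ENNReal.ofReal_tsum_of_nonneg (fun k => FCE_nonneg γ k u) (summable_FCE hγ u)
  simp_rw [h1]
  rw [lintegral_tsum fun k => ((FCE_meas γ k).ennreal_ofReal).aemeasurable]
  exact tsum_congr fun k => lint_F hγ k

lemma psi_integrable (hγ : γ ∈ Ioo (0 : ℝ) 1) : IntegrableOn (psiCE γ) (Ioi 0) := by
  refine ⟨(psi_meas hγ).aestronglyMeasurable, ?_⟩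
  rw [hasFiniteIntegral_iff_ofReal (ae_of_all _ fun u => psi_nonneg γ u), lint_psi hγ]
  exact lt_of_le_of_ne le_top sum_ofReal_ne_top

lemma int_F (hγ : γ ∈ Ioo (0 : ℝ) 1) (k : ℕ) :
    ∫ u in Ioi (0 : ℝ), FCE γ k u = ((k : ℝ) + 1) ^ (-2 : ℝ) := by
  have hsub : Ioo (aCE γ k) ((k : ℝ) + 1) ⊆ Ioi (0 : ℝ) := fun x hx =>
    lt_of_le_of_lt (aCE_nonneg hγ k) hx.1
  unfold FCE
  rw [integral_indicator measurableSet_Ioo,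
    Measure.restrict_restrict measurableSet_Ioo,
    inter_eq_self_of_subset_left hsub, setIntegral_const, Real.volume_real_Ioo_of_le (by linarith [aCE_lt γ k]), smul_eq_mul]
  have hba : (k : ℝ) + 1 - aCE γ k = ((k : ℝ) + 1) ^ (-((4 - γ) / (1 - γ))) := by
    unfold aCE; ring
  rw [hba, ← Real.rpow_add (by positivity)]
  congr 1
  rw [← exp_sum hγ]; ring

lemma lint_F_nnorm (hγ : γ ∈ Ioo (0 : ℝ) 1) (k : ℕ) :
    ∫⁻ u in Ioi (0 : ℝ), (‖FCE γ k u‖₊ : ENNReal) =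
      ENNReal.ofReal (((k : ℝ) + 1) ^ (-2 : ℝ)) := by
  rw [← lint_F hγ k]
  exact lintegral_congr fun u => Real.enorm_eq_ofReal (FCE_nonneg γ k u)

lemma int_psi (hγ : γ ∈ Ioo (0 : ℝ) 1) :
    (∫ u in Ioi (0 : ℝ), psiCE γ u) = ∑' k : ℕ, ((k : ℝ) + 1) ^ (-2 : ℝ) := by
  have h := integral_tsum (μ := volume.restrict (Ioi (0 : ℝ))) (f := FCE γ)
    (fun k => (FCE_meas γ k).aestronglyMeasurable) ?_
  · rw [show (fun u => psiCE γ u) = fun u => ∑' k, FCE γ k u from funext (psiCE_eq γ)] at *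
    rw [h]
    exact tsum_congr fun k => int_F hγ k
  · refine (tsum_congr fun k => lint_F_nnorm hγ k).trans_ne ?_
    exact sum_ofReal_ne_top

/-! ### The lower bound -/

lemma one_le_w {t u : ℝ} (hγ : γ ∈ Ioo (0 : ℝ) 1) (ht : 0 < t) (hu : u ∈ Ioo (0 : ℝ) t) :
    1 ≤ (1 - u / t) ^ (γ - 1) := by
  have h1 : u / t < 1 := (div_lt_one ht).2 hu.2
  have h2 : 0 < u / t := div_pos hu.1 ht
  exact Real.one_le_rpow_of_pos_of_le_one_of_nonpos (by linarith) (by linarith)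
    (by linarith [hγ.2])

lemma rpow_integrableOn_Ioc (hγ : γ ∈ Ioo (0 : ℝ) 1) {t : ℝ} (ht : 0 < t) :
    IntegrableOn (fun u : ℝ => (1 - u / t) ^ (γ - 1)) (Ioc 0 t) := by
  have J : IntervalIntegrable (fun x : ℝ => x ^ (γ - 1)) volume 0 t :=
    intervalIntegral.intervalIntegrable_rpow' (by linarith [hγ.1])
  have J2 := (J.comp_sub_left t).symm
  have J3 : IntegrableOn (fun x : ℝ => (t - x) ^ (γ - 1)) (Ioc 0 t) := by
    have := J2.1
    simpa using this
  have J4 : IntegrableOn (fun u : ℝ => (t - u) ^ (γ - 1) * (t ^ (γ - 1))⁻¹) (Ioc 0 t) :=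
    J3.mul_const _
  refine J4.congr_fun (fun u hu => ?_) measurableSet_Ioc
  have h1 : 1 - u / t = (t - u) / t := by field_simp
  rw [h1, Real.div_rpow (by linarith [hu.2]) ht.le, div_eq_mul_inv]

lemma psi_le (hγ : γ ∈ Ioo (0 : ℝ) 1) {n : ℕ} {u : ℝ} (hu : u ∈ Ioo (0 : ℝ) (n : ℝ)) :
    psiCE γ u ≤ (n : ℝ) ^ ((2 + γ) / (1 - γ)) := by
  have h1γ : (0:ℝ) < 1 - γ := by linarith [hγ.2]
  by_cases h : ∃ k : ℕ, u ∈ Ioo (aCE γ k) ((k : ℝ) + 1)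
  · obtain ⟨k, hk⟩ := h
    rw [psi_eval hγ k hk]
    have hku : (k : ℝ) < (n : ℝ) := lt_trans (lt_of_le_of_lt (k_le_aCE hγ k) hk.1) hu.2
    have hkn : k < n := by exact_mod_cast hku
    have hk1 : (k : ℝ) + 1 ≤ (n : ℝ) := by exact_mod_cast hkn
    exact Real.rpow_le_rpow (by positivity) hk1
      (div_nonneg (by linarith [hγ.1]) (by linarith))
  · rw [psi_zero fun k hk => h ⟨k, hk⟩]
    exact Real.rpow_nonneg (Nat.cast_nonneg n) _

lemma wpsi_integrable (hγ : γ ∈ Ioo (0 : ℝ) 1) {n : ℕ} (hn : 1 ≤ n) :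
    IntegrableOn (fun u : ℝ => (1 - u / (n : ℝ)) ^ (γ - 1) * psiCE γ u)
      (Ioo (0 : ℝ) (n : ℝ)) := by
  have ht : (0:ℝ) < (n : ℝ) := by exact_mod_cast hn
  have hbase : IntegrableOn (fun u : ℝ => (1 - u / (n : ℝ)) ^ (γ - 1)) (Ioo 0 (n : ℝ)) :=
    (rpow_integrableOn_Ioc hγ ht).mono_set Ioo_subset_Ioc_self
  have hmeas : Measurable fun u : ℝ => (1 - u / (n : ℝ)) ^ (γ - 1) * psiCE γ u := by
    have h1 : Measurable fun u : ℝ => (1 - u / (n : ℝ)) ^ (γ - 1) := by fun_prop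
    exact h1.mul (psi_meas hγ)
  refine Integrable.mono' (hbase.mul_const ((n : ℝ) ^ ((2 + γ) / (1 - γ))))
    hmeas.aestronglyMeasurable ?_
  rw [ae_restrict_iff' measurableSet_Ioo]
  refine ae_of_all _ fun u hu => ?_
  have h0 : (0:ℝ) ≤ 1 - u / (n : ℝ) := by
    have := (div_lt_one ht).2 hu.2; linarith
  have hr : (0:ℝ) ≤ (1 - u / (n : ℝ)) ^ (γ - 1) := Real.rpow_nonneg h0 _
  rw [Real.norm_eq_abs, abs_of_nonneg (mul_nonneg hr (psi_nonneg γ u))]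
  exact mul_le_mul_of_nonneg_left (psi_le hγ hu) hr

lemma wpsi_integrable' (hγ : γ ∈ Ioo (0 : ℝ) 1) {n : ℕ} (hn : 1 ≤ n) :
    IntegrableOn (fun u : ℝ => ((1 - u / (n : ℝ)) ^ (γ - 1) - 1) * psiCE γ u)
      (Ioo (0 : ℝ) (n : ℝ)) := by
  have h1 : IntegrableOn (psiCE γ) (Ioo (0:ℝ) (n : ℝ)) :=
    (psi_integrable hγ).mono_set (fun x hx => hx.1)
  exact IntegrableOn.congr_fun ((wpsi_integrable hγ hn).sub h1)
    (fun u _ => by simp only [Pi.sub_apply]; ring) measurableSet_Ioo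

lemma key_bound (hγ : γ ∈ Ioo (0 : ℝ) 1) {n : ℕ} (hn : 1 ≤ n) :
    γ⁻¹ * (n : ℝ) ^ (3 - 2 * γ) - (n : ℝ) ^ (-2 : ℝ) ≤
      ∫ u in Ioo (0 : ℝ) (n : ℝ), ((1 - u / (n : ℝ)) ^ (γ - 1) - 1) * psiCE γ u := by
  have hγ0 := hγ.1
  have hγ1 := hγ.2
  have h1γ : (0:ℝ) < 1 - γ := by linarith
  set t : ℝ := (n : ℝ) with htdef
  have ht1 : (1:ℝ) ≤ t := by rw [htdef]; exact_mod_cast hn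
  have ht : (0:ℝ) < t := by linarith
  set α : ℝ := (4 - γ) / (1 - γ) with hα
  set β : ℝ := (2 + γ) / (1 - γ) with hβ
  set a : ℝ := t - t ^ (-α) with ha
  -- basic facts about a
  have hta : t - a = t ^ (-α) := by rw [ha]; ring
  have hα0 : 0 ≤ α := by rw [hα]; exact div_nonneg (by linarith) (by linarith)
  have htα1 : t ^ (-α) ≤ 1 :=
    Real.rpow_le_one_of_one_le_of_nonpos ht1 (neg_nonpos.2 hα0)
  have htα0 : 0 < t ^ (-α) := Real.rpow_pos_of_pos ht _
  have ha0 : 0 ≤ a := by rw [ha]; linarith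
  have halt : a < t := by rw [ha]; linarith
  have hsub : Ioo a t ⊆ Ioo 0 t := fun x hx => ⟨lt_of_le_of_lt ha0 hx.1, hx.2⟩
  -- cast: the (n-1)-th bump is exactly (a, t)
  have hcast : ((n - 1 : ℕ) : ℝ) + 1 = t := by
    rw [htdef, Nat.cast_sub hn, Nat.cast_one]; ring
  have hbump : Ioo (aCE γ (n - 1)) (((n - 1 : ℕ) : ℝ) + 1) = Ioo a t := by
    unfold aCE
    rw [hcast, ha, hα]
  -- step 1: mono in set
  have hmono : (∫ u in Ioo a t, ((1 - u / t) ^ (γ - 1) - 1) * psiCE γ u) ≤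
      ∫ u in Ioo (0:ℝ) t, ((1 - u / t) ^ (γ - 1) - 1) * psiCE γ u := by
    refine setIntegral_mono_set (wpsi_integrable' hγ hn) ?_ hsub.eventuallyLE
    filter_upwards [ae_restrict_mem measurableSet_Ioo] with u hu
    exact mul_nonneg (by linarith [one_le_w hγ ht hu]) (psi_nonneg γ u)
  -- step 2: on (a,t), psi is the constant t^β
  have hconst : (∫ u in Ioo a t, ((1 - u / t) ^ (γ - 1) - 1) * psiCE γ u) =
      (∫ u in Ioo a t, ((1 - u / t) ^ (γ - 1) - 1)) * t ^ β := by
    rw [← integral_mul_const]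
    refine setIntegral_congr_fun measurableSet_Ioo fun u hu => ?_
    rw [← hbump] at hu
    rw [psi_eval hγ (n - 1) hu, hcast, hβ]
  -- step 3: computing the weight integral
  have hII : IntervalIntegrable (fun u : ℝ => (1 - u / t) ^ (γ - 1)) volume a t := by
    rw [intervalIntegrable_iff_integrableOn_Ioc_of_le halt.le]
    exact (rpow_integrableOn_Ioc hγ ht).mono_set (Ioc_subset_Ioc_left ha0)
  have hw : (∫ u in Ioo a t, ((1 - u / t) ^ (γ - 1) - 1)) =
      t ^ (-(α * γ)) * t ^ (1 - γ) / γ - t ^ (-α) := by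
    rw [← integral_Ioc_eq_integral_Ioo, ← intervalIntegral.integral_of_le halt.le,
      intervalIntegral.integral_sub hII (intervalIntegrable_const (c := (1:ℝ)))]
    have h1 : (∫ u in a..t, (1 - u / t) ^ (γ - 1)) =
        ∫ u in a..t, (t - u) ^ (γ - 1) * (t ^ (γ - 1))⁻¹ := by
      refine intervalIntegral.integral_congr fun u hu => ?_
      rw [uIcc_of_le halt.le] at hu
      have h2 : 1 - u / t = (t - u) / t := by field_simp
      rw [h2, Real.div_rpow (by linarith [hu.2]) ht.le, div_eq_mul_inv]
    rw [h1, intervalIntegral.integral_mul_const,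
      intervalIntegral.integral_comp_sub_left (fun x : ℝ => x ^ (γ - 1)) t, sub_self,
      integral_rpow (Or.inl (by linarith : (-1:ℝ) < γ - 1))]
    have h3 : γ - 1 + 1 = γ := by ring
    rw [h3, Real.zero_rpow (ne_of_gt hγ0)]
    have h4 : (∫ _ in a..t, (1:ℝ)) = t - a := by simp
    rw [h4, hta, ← Real.rpow_mul ht.le (-α) γ, ← Real.rpow_neg ht.le (γ - 1),
      (show -α * γ = -(α * γ) by ring), (show -(γ - 1) = 1 - γ by ring)]
    ring
  -- step 4: arithmetic
  have e1 : t ^ (-(α * γ)) * t ^ (1 - γ) * t ^ β = t ^ (3 - 2 * γ) := by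
    rw [← Real.rpow_add ht, ← Real.rpow_add ht]
    congr 1
    rw [hα, hβ]
    field_simp
    ring
  have e2 : t ^ (-α) * t ^ β = t ^ (-2 : ℝ) := by
    rw [← Real.rpow_add ht]
    congr 1
    rw [hα, hβ]
    field_simp
    ring
  calc γ⁻¹ * t ^ (3 - 2 * γ) - t ^ (-2 : ℝ)
      = (t ^ (-(α * γ)) * t ^ (1 - γ) / γ - t ^ (-α)) * t ^ β := by
        rw [← e1, ← e2]; ring
    _ = ∫ u in Ioo a t, ((1 - u / t) ^ (γ - 1) - 1) * psiCE γ u := by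
        rw [hconst, hw]
    _ ≤ _ := hmono

end CEaux

open CEaux in
/-- Counterexample: `ψ` is integrable on `(0,∞)` with
`∫_0^∞ ψ = Σ_{n≥1} n^{−2} < ∞`, yet `I(ψ, n) ≥ γ⁻¹ n^{3−2γ} − n^{−2}` for every
`n ≥ 1`; in particular `∫_0^t (1 − u/t)^{γ−1} ψ(u) du` does not converge to
`∫_0^∞ ψ(u) du` as `t → ∞`. -/
theorem counterexample_singular_weight (γ : ℝ) (hγ : γ ∈ Ioo (0 : ℝ) 1) :
    IntegrableOn (psiCE γ) (Ioi 0) ∧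
    Summable (fun n : ℕ => ((n : ℝ) + 1) ^ (-2 : ℝ)) ∧
    (∫ u in Ioi (0 : ℝ), psiCE γ u) = ∑' n : ℕ, ((n : ℝ) + 1) ^ (-2 : ℝ) ∧
    (∀ n : ℕ, 1 ≤ n →
      γ⁻¹ * (n : ℝ) ^ (3 - 2 * γ) - (n : ℝ) ^ (-2 : ℝ) ≤ Iweight γ (psiCE γ) n) ∧
    ¬ Tendsto (fun t : ℝ => ∫ u in Ioo (0 : ℝ) t, (1 - u / t) ^ (γ - 1) * psiCE γ u)
        atTop (nhds (∫ u in Ioi (0 : ℝ), psiCE γ u)) := by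
  have hkey : ∀ n : ℕ, 1 ≤ n →
      γ⁻¹ * (n : ℝ) ^ (3 - 2 * γ) - (n : ℝ) ^ (-2 : ℝ) ≤ Iweight γ (psiCE γ) n :=
    fun n hn => by simpa [Iweight] using key_bound hγ hn
  refine ⟨psi_integrable hγ, sum_inv_sq, int_psi hγ, hkey, ?_⟩
  intro hcon
  set f : ℝ → ℝ := fun t => ∫ u in Ioo (0 : ℝ) t, (1 - u / t) ^ (γ - 1) * psiCE γ u with hf
  -- lower bound f at natural arguments
  have hlow : ∀ n : ℕ, γ⁻¹ * (n : ℝ) - 1 ≤ f (n : ℝ) := by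
    intro n
    rcases Nat.eq_zero_or_pos n with h0 | hn
    · subst h0
      have : f ((0:ℕ) : ℝ) = 0 := by
        simp [hf]
      rw [this]
      simp only [Nat.cast_zero, mul_zero]
      norm_num
    · have ht : (0:ℝ) < (n : ℝ) := by exact_mod_cast hn
      have ht1 : (1:ℝ) ≤ (n : ℝ) := by exact_mod_cast hn
      -- f n = Iweight + ∫ psi ≥ Iweight
      have hsplit : f ((n : ℕ) : ℝ) =
          (∫ u in Ioo (0:ℝ) (n:ℝ), ((1 - u / (n:ℝ)) ^ (γ - 1) - 1) * psiCE γ u) +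
            ∫ u in Ioo (0:ℝ) (n:ℝ), psiCE γ u := by
        rw [hf, ← integral_add (wpsi_integrable' hγ hn)
          ((psi_integrable hγ).mono_set (fun x hx => hx.1))]
        refine setIntegral_congr_fun measurableSet_Ioo fun u _ => by ring
      have hpsi_nn : 0 ≤ ∫ u in Ioo (0:ℝ) (n:ℝ), psiCE γ u :=
        setIntegral_nonneg measurableSet_Ioo fun u _ => psi_nonneg γ u
      have h1 := key_bound hγ hn
      have h2 : γ⁻¹ * (n : ℝ) - 1 ≤ γ⁻¹ * (n : ℝ) ^ (3 - 2 * γ) - (n : ℝ) ^ (-2 : ℝ) := by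
        have hn3 : (n : ℝ) ^ (1:ℝ) ≤ (n : ℝ) ^ (3 - 2 * γ) :=
          Real.rpow_le_rpow_of_exponent_le ht1 (by linarith [hγ.2])
        rw [Real.rpow_one] at hn3
        have hn2 : (n : ℝ) ^ (-2 : ℝ) ≤ 1 :=
          Real.rpow_le_one_of_one_le_of_nonpos ht1 (by norm_num)
        have hγinv : 0 ≤ γ⁻¹ := inv_nonneg.2 hγ.1.le
        have := mul_le_mul_of_nonneg_left hn3 hγinv
        linarith
      calc γ⁻¹ * (n : ℝ) - 1 ≤ γ⁻¹ * (n : ℝ) ^ (3 - 2 * γ) - (n : ℝ) ^ (-2 : ℝ) := h2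
        _ ≤ ∫ u in Ioo (0:ℝ) (n:ℝ), ((1 - u / (n:ℝ)) ^ (γ - 1) - 1) * psiCE γ u := h1
        _ ≤ f ((n : ℕ) : ℝ) := by rw [hsplit]; linarith
  -- f ∘ nat cast tends to L, but also to atTop: contradiction
  have h1 : Tendsto (fun n : ℕ => f (n : ℝ)) atTop
      (nhds (∫ u in Ioi (0 : ℝ), psiCE γ u)) :=
    hcon.comp tendsto_natCast_atTop_atTop
  have h2 : Tendsto (fun n : ℕ => f (n : ℝ)) atTop atTop := by
    refine tendsto_atTop_mono hlow ?_
    have hg : Tendsto (fun n : ℕ => γ⁻¹ * (n : ℝ)) atTop atTop :=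
      (tendsto_natCast_atTop_atTop).const_mul_atTop (inv_pos.2 hγ.1)
    simpa [sub_eq_add_neg] using tendsto_atTop_add_const_right _ (-1 : ℝ) hg
  exact not_tendsto_atTop_of_tendsto_nhds h1 h2
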